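/- Let G be an SZF-complete graph and x ∈ V(G). Let G' be obtained from G by adding two new vertices y, z and the edges xy and yz. Then G' is SZF-complete. -/

import Mathlib

open Matrix
open scoped Classical

/-- A set is stalled (skew zero forcing closed) if no vertex has exactly one neighbor
outside the set. -/
def SZFStalled {V : Type*} (G : SimpleGraph V) (S : Set V) : Prop :=
  ∀ v w : V, G.Adj v w → w ∉ S → ∃ u : V, G.Adj v u ∧ u ∉ S ∧ u ≠ w

/-- A graph is SZF-complete if every skew zero forcing closed set of vertices is the zero
locus of some vector in the kernel of its adjacency matrix. -/
def SZFComplete {V : Type*} [Fintype V] [DecidableEq V] (G : SimpleGraph V) : Prop :=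
  ∀ S : Set V, SZFStalled G S →
    ∃ x : V → ℝ, G.adjMatrix ℝ *ᵥ x = 0 ∧ {v : V | x v = 0} = S

/-- The graph obtained from `G` by appending a path of length two at the vertex `x`:
new vertices `y = Sum.inr false` and `z = Sum.inr true`, with new edges `x y` and `y z`. -/
def extendByPath {V : Type*} (G : SimpleGraph V) (x : V) : SimpleGraph (V ⊕ Bool) :=
  SimpleGraph.fromRel (fun a b =>
    (∃ u v : V, a = Sum.inl u ∧ b = Sum.inl v ∧ G.Adj u v) ∨
    (a = Sum.inl x ∧ b = Sum.inr false) ∨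
    (a = Sum.inr false ∧ b = Sum.inr true))

section aux
variable {V : Type*} {G : SimpleGraph V} {x : V}

lemma adj_ll (u v : V) : (extendByPath G x).Adj (Sum.inl u) (Sum.inl v) ↔ G.Adj u v := by
  simp only [extendByPath, SimpleGraph.fromRel_adj]
  constructor
  · rintro ⟨hne, h | h⟩
    · rcases h with ⟨a, b, ha, hb, hab⟩ | ⟨_, h⟩ | ⟨h, _⟩ <;> simp_all
    · rcases h with ⟨a, b, ha, hb, hab⟩ | ⟨_, h⟩ | ⟨h, _⟩ <;> simp_all
      exact hab.symm
  · intro h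
    exact ⟨by simpa using h.ne, Or.inl (Or.inl ⟨u, v, rfl, rfl, h⟩)⟩

lemma adj_lr (u : V) (b : Bool) :
    (extendByPath G x).Adj (Sum.inl u) (Sum.inr b) ↔ u = x ∧ b = false := by
  simp [extendByPath, SimpleGraph.fromRel_adj]

lemma adj_rl (u : V) (b : Bool) :
    (extendByPath G x).Adj (Sum.inr b) (Sum.inl u) ↔ u = x ∧ b = false := by
  rw [SimpleGraph.adj_comm]; exact adj_lr u b

lemma adj_rr (a b : Bool) : (extendByPath G x).Adj (Sum.inr a) (Sum.inr b) ↔ a ≠ b := by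
  simp only [extendByPath, SimpleGraph.fromRel_adj]
  cases a <;> cases b <;> simp

end aux

/-- Appending a path of length two to an SZF-complete graph yields an
SZF-complete graph. -/
theorem stmt14 {V : Type*} [Fintype V] [DecidableEq V] (G : SimpleGraph V) (x : V)
    (hG : SZFComplete G) : SZFComplete (extendByPath G x) := by

  intro S' hS'
  -- y = inr false is in S'
  have hy : (Sum.inr false : V ⊕ Bool) ∈ S' := by
    by_contra hy
    obtain ⟨u, hu, huS, hune⟩ :=
      hS' (Sum.inr true) (Sum.inr false) ((adj_rr true false).2 (by simp)) hy
    match u with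
    | Sum.inl u => exact absurd ((adj_rl u true).1 hu).2 (by simp)
    | Sum.inr true => exact absurd ((adj_rr true true).1 hu) (by simp)
    | Sum.inr false => exact hune rfl
  -- inl x ∈ S' ↔ inr true ∈ S'
  have hxz : (Sum.inl x : V ⊕ Bool) ∈ S' ↔ (Sum.inr true : V ⊕ Bool) ∈ S' := by
    constructor
    · intro hx
      by_contra hz
      obtain ⟨u, hu, huS, hune⟩ :=
        hS' (Sum.inr false) (Sum.inr true) ((adj_rr false true).2 (by simp)) hz
      match u with
      | Sum.inl u =>
        obtain ⟨rfl, -⟩ := (adj_rl u false).1 hu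
        exact huS hx
      | Sum.inr true => exact hune rfl
      | Sum.inr false => exact absurd ((adj_rr false false).1 hu) (by simp)
    · intro hz
      by_contra hx
      obtain ⟨u, hu, huS, hune⟩ :=
        hS' (Sum.inr false) (Sum.inl x) ((adj_rl x false).2 ⟨rfl, rfl⟩) hx
      match u with
      | Sum.inl u =>
        obtain ⟨rfl, -⟩ := (adj_rl u false).1 hu
        exact hune rfl
      | Sum.inr true => exact huS hz
      | Sum.inr false => exact absurd ((adj_rr false false).1 hu) (by simp)
  -- S is stalled in G
  set S : Set V := {v | Sum.inl v ∈ S'} with hSdef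
  have hSst : SZFStalled G S := by
    intro v w hvw hw
    obtain ⟨u, hu, huS, hune⟩ := hS' (Sum.inl v) (Sum.inl w) ((adj_ll v w).2 hvw) hw
    match u with
    | Sum.inl u =>
      exact ⟨u, (adj_ll v u).1 hu, huS, fun h => hune (by rw [h])⟩
    | Sum.inr b =>
      obtain ⟨-, rfl⟩ := (adj_lr v b).1 hu
      exact absurd hy huS
  obtain ⟨f, hf, hfz⟩ := hG S hSst
  -- the extended vector
  refine ⟨Sum.elim f (fun b => if b then -f x else 0), ?_, ?_⟩
  · funext a
    have hmv : ∀ (H : SimpleGraph (V ⊕ Bool)) (g : V ⊕ Bool → ℝ) (a : V ⊕ Bool),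
        (H.adjMatrix ℝ *ᵥ g) a = ∑ j, if H.Adj a j then g j else 0 := by
      intro H g a
      simp [mulVec, dotProduct, SimpleGraph.adjMatrix_apply, ite_mul]
    rw [Pi.zero_apply, hmv, Fintype.sum_sum_type, Fintype.sum_bool]
    match a with
    | Sum.inl v =>
      have h1 : ∑ u : V, (if (extendByPath G x).Adj (Sum.inl v) (Sum.inl u) then
          (Sum.elim f (fun b => if b then -f x else 0)) (Sum.inl u) else 0) = 0 := by
        have := congrFun hf v
        simp only [mulVec, dotProduct, SimpleGraph.adjMatrix_apply, Pi.zero_apply] at this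
        simp only [adj_ll, Sum.elim_inl]
        simpa [ite_mul] using this
      simp only [Sum.elim_inl] at h1
      simp [adj_lr, h1]
    | Sum.inr false =>
      have hfx : ∑ u : V, (if (extendByPath G x).Adj (Sum.inr false) (Sum.inl u) then
          (Sum.elim f (fun b => if b then -f x else 0)) (Sum.inl u) else 0) = f x := by
        simp only [adj_rl, Sum.elim_inl]
        simp
      simp only [Sum.elim_inl] at hfx
      simp [adj_rr, hfx]
    | Sum.inr true =>
      simp [adj_rl, adj_rr]
  · ext a
    match a with
    | Sum.inl v =>
      have : (v ∈ {v : V | f v = 0}) ↔ v ∈ S := by rw [hfz]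
      simpa [hSdef] using this
    | Sum.inr false => simpa using hy
    | Sum.inr true =>
      have : (x ∈ {v : V | f v = 0}) ↔ x ∈ S := by rw [hfz]
      simp only [Set.mem_setOf_eq] at this
      simp only [Set.mem_setOf_eq, Sum.elim_inr, if_pos]
      rw [neg_eq_zero]
      exact this.trans hxz
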